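/- If L is a regular language over a finite alphabet, then its generating function f(z) = Σ_{w ∈ L} z^{len(w)} (counting words by length) is a rational function; in particular, the sequence n ↦ #{w ∈ L : len(w) = n} satisfies a linear recurrence with constant coefficients. -/

import Mathlib

attribute [local instance] Classical.propDecidable

open Finset Polynomial PowerSeries

-- rationality of the generating function from a linear recurrence
lemma rat_of_rec (a : ℕ → ℚ) (d : ℕ) (hd : 1 ≤ d) (c : Fin d → ℚ)
    (h : ∀ n, a (n + d) = ∑ i : Fin d, c i * a (n + i)) :
    ∃ p q : Polynomial ℚ, q.coeff 0 ≠ 0 ∧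
      (q : PowerSeries ℚ) * PowerSeries.mk a = (p : PowerSeries ℚ) := by
  set q : Polynomial ℚ := 1 - ∑ i : Fin d, Polynomial.C (c i) * Polynomial.X ^ (d - (i : ℕ))
    with hq
  have hq0 : q.coeff 0 ≠ 0 := by
    have h1 : ∀ i : Fin d, (if (0:ℕ) = d - (i:ℕ) then (1:ℚ) else 0) = 0 := by
      intro i
      have := i.isLt
      exact if_neg (by omega)
    have : q.coeff 0 = 1 := by
      simp only [hq, Polynomial.coeff_sub, Polynomial.coeff_one, Polynomial.finset_sum_coeff,
        Polynomial.coeff_C_mul, Polynomial.coeff_X_pow, h1, mul_zero, Finset.sum_const_zero,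
        sub_zero, if_pos]
    rw [this]
    exact one_ne_zero
  have key : ∀ m, d ≤ m → (PowerSeries.coeff (R := ℚ) m) ((q : PowerSeries ℚ) * PowerSeries.mk a) = 0 := by
    intro m hm
    obtain ⟨n, rfl⟩ : ∃ n, m = n + d := ⟨m - d, by omega⟩
    have hcast : ((q : Polynomial ℚ) : PowerSeries ℚ)
        = 1 - ∑ i : Fin d, PowerSeries.C (R := ℚ) (c i) * PowerSeries.X ^ (d - (i : ℕ)) := by
      rw [hq]
      push_cast [Polynomial.coe_sub, Polynomial.coe_one]
      rw [← Polynomial.coeToPowerSeries.ringHom_apply, map_sum]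
      simp [Polynomial.coeToPowerSeries.ringHom_apply, Polynomial.coe_mul, Polynomial.coe_pow,
        Polynomial.coe_C, Polynomial.coe_X]
    rw [hcast, sub_mul, one_mul, map_sub, Finset.sum_mul, map_sum]
    have hterm : ∀ i : Fin d,
        (PowerSeries.coeff (R := ℚ) (n + d)) (PowerSeries.C (R := ℚ) (c i) * PowerSeries.X ^ (d - (i:ℕ)) * PowerSeries.mk a)
          = c i * a (n + i) := by
      intro i
      rw [mul_assoc, PowerSeries.coeff_C_mul]
      have hni : n + d = (n + (i:ℕ)) + (d - (i:ℕ)) := by omega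
      rw [hni, PowerSeries.coeff_X_pow_mul, PowerSeries.coeff_mk]
    rw [Finset.sum_congr rfl fun i _ => hterm i, PowerSeries.coeff_mk, h n, sub_self]
  refine ⟨PowerSeries.trunc d ((q : PowerSeries ℚ) * PowerSeries.mk a), q, hq0, ?_⟩
  ext m
  rw [Polynomial.coeff_coe, PowerSeries.coeff_trunc]
  by_cases hm : m < d
  · rw [if_pos hm]
  · rw [if_neg hm, key m (le_of_not_gt hm)]




namespace RegularGFAux

noncomputable section

variable {S : Type*} [Fintype S] {σ : Type} [Fintype σ] (M : DFA S σ)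

/-- Transfer matrix of the DFA. -/
def tmat : Matrix σ σ ℚ := fun s t => (Fintype.card {a : S // M.step s a = t} : ℚ)

/-- Splitting off the head of a vector. -/
def vecEquiv (n : ℕ) : List.Vector S (n + 1) ≃ S × List.Vector S n where
  toFun v := (v.head, v.tail)
  invFun p := p.1 ::ᵥ p.2
  left_inv v := v.cons_head_tail
  right_inv p := by
    cases p with
    | mk a v => simp [List.Vector.head_cons, List.Vector.tail_cons]

lemma card_succ (n : ℕ) (s t : σ) :
    Fintype.card {v : List.Vector S (n + 1) // M.evalFrom s v.toList = t}
      = ∑ a : S, Fintype.card {v : List.Vector S n // M.evalFrom (M.step s a) v.toList = t} := by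
  have e : {v : List.Vector S (n + 1) // M.evalFrom s v.toList = t}
      ≃ Σ a : S, {v : List.Vector S n // M.evalFrom (M.step s a) v.toList = t} := by
    refine (Equiv.subtypeEquiv (vecEquiv (S := S) n) (fun v => ?_)).trans
      (Equiv.subtypeProdEquivSigmaSubtype
        (fun (a : S) (v : List.Vector S n) => M.evalFrom (M.step s a) v.toList = t))
    obtain ⟨l, hl⟩ := v
    cases l with
    | nil => simp at hl
    | cons a l' =>
      simp [vecEquiv, List.Vector.head, List.Vector.tail, List.Vector.toList,
        DFA.evalFrom]
  rw [Fintype.card_congr e, Fintype.card_sigma]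

lemma tmat_pow (n : ℕ) (s t : σ) :
    (tmat M ^ n) s t
      = (Fintype.card {v : List.Vector S n // M.evalFrom s v.toList = t} : ℚ) := by
  induction n generalizing s with
  | zero =>
    rw [pow_zero, Matrix.one_apply]
    by_cases h : s = t
    · subst h
      rw [if_pos rfl]
      have : Fintype.card {v : List.Vector S 0 // M.evalFrom s v.toList = s} = 1 := by
        rw [Fintype.card_eq_one_iff]
        refine ⟨⟨List.Vector.nil, by simp⟩, fun y => Subtype.ext ?_⟩
        rw [y.1.eq_nil]
      rw [this]; norm_num
    · rw [if_neg h]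
      have : Fintype.card {v : List.Vector S 0 // M.evalFrom s v.toList = t} = 0 := by
        rw [Fintype.card_eq_zero_iff]
        refine ⟨fun v => h ?_⟩
        have hv := v.2
        rwa [v.1.eq_nil] at hv
      rw [this]; norm_num
  | succ n ih =>
    rw [pow_succ', Matrix.mul_apply]
    have step1 : ∀ u : σ, tmat M s u * (tmat M ^ n) u t
        = ∑ a ∈ Finset.univ.filter (fun a : S => M.step s a = u),
            (Fintype.card {v : List.Vector S n // M.evalFrom u v.toList = t} : ℚ) := by
      intro u
      rw [Finset.sum_const, nsmul_eq_mul, tmat, ih u, Fintype.card_subtype]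
    rw [Finset.sum_congr rfl fun u _ => step1 u]
    rw [card_succ]
    push_cast
    convert Finset.sum_fiberwise' Finset.univ (fun a : S => M.step s a)
      (fun u : σ => (Fintype.card {v : List.Vector S n // M.evalFrom u v.toList = t} : ℚ)) using 2

lemma count_eq (n : ℕ) :
    (Nat.card {w : List S // w ∈ M.accepts ∧ w.length = n} : ℚ)
      = ∑ t : σ, (tmat M ^ n) M.start t * (if t ∈ M.accept then 1 else 0) := by
  have e : {w : List S // w ∈ M.accepts ∧ w.length = n}
      ≃ {v : List.Vector S n // M.evalFrom M.start v.toList ∈ M.accept} :=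
    { toFun := fun w => ⟨⟨w.1, w.2.2⟩, ((DFA.mem_accepts M).mp w.2.1)⟩,
      invFun := fun v => ⟨v.1.1, ((DFA.mem_accepts M).mpr v.2), v.1.2⟩,
      left_inv := fun w => rfl,
      right_inv := fun v => rfl }
  rw [Nat.card_congr e, Nat.card_eq_fintype_card]
  have : ∀ t : σ, (tmat M ^ n) M.start t * (if t ∈ M.accept then 1 else 0)
      = ((if t ∈ M.accept then
          (Finset.univ.filter
            (fun v : List.Vector S n => M.evalFrom M.start v.toList = t)).card else 0 : ℕ) : ℚ) := by
    intro t
    rw [tmat_pow, Fintype.card_subtype]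
    split
    · push_cast; ring
    · push_cast; ring
  rw [Finset.sum_congr rfl fun t _ => this t, ← Nat.cast_sum]
  norm_cast
  rw [Fintype.card_subtype, ← Finset.sum_filter]
  have h2 := (Finset.sum_card_fiberwise_eq_card_filter Finset.univ
      (Finset.univ.filter (fun t : σ => t ∈ M.accept))
      (fun v : List.Vector S n => M.evalFrom M.start v.toList)).symm
  simpa using h2

end
end RegularGFAux




lemma matrix_rec {σ : Type} [Fintype σ] [DecidableEq σ] (A : Matrix σ σ ℚ) (s : σ) (w : σ → ℚ) :
    ∃ c : Fin (Fintype.card σ) → ℚ, ∀ n : ℕ,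
      (∑ t, (A ^ (n + Fintype.card σ)) s t * w t)
        = ∑ i : Fin (Fintype.card σ), c i * ∑ t, (A ^ (n + (i : ℕ))) s t * w t := by
  set d := Fintype.card σ with hd
  have hmonic := A.charpoly_monic
  have hdeg : A.charpoly.natDegree = d := A.charpoly_natDegree_eq_dim
  have h0 : Polynomial.aeval A A.charpoly = 0 := A.aeval_self_charpoly
  rw [Polynomial.aeval_eq_sum_range, hdeg, Finset.sum_range_succ] at h0
  have hc : A.charpoly.coeff d = 1 := by
    have := hmonic.coeff_natDegree; rwa [hdeg] at this
  rw [hc, one_smul] at h0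
  have hAd : A ^ d = ∑ i ∈ Finset.range d, (-(A.charpoly.coeff i)) • A ^ i := by
    have h1 : A ^ d = -∑ i ∈ Finset.range d, A.charpoly.coeff i • A ^ i :=
      eq_neg_of_add_eq_zero_right h0
    rw [h1, ← Finset.sum_neg_distrib]
    exact Finset.sum_congr rfl fun i _ => (neg_smul _ _).symm
  refine ⟨fun i => -(A.charpoly.coeff i), fun n => ?_⟩
  have hAnd : A ^ (n + d) = ∑ i ∈ Finset.range d, (-(A.charpoly.coeff i)) • A ^ (n + i) := by
    rw [pow_add, hAd, Finset.mul_sum]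
    exact Finset.sum_congr rfl fun i _ => by rw [mul_smul_comm, ← pow_add]
  calc ∑ t, (A ^ (n + d)) s t * w t
      = ∑ t, (∑ i ∈ Finset.range d, (-(A.charpoly.coeff i)) * (A ^ (n + i)) s t) * w t := by
        rw [hAnd]
        simp [Matrix.sum_apply]
    _ = ∑ i ∈ Finset.range d, (-(A.charpoly.coeff i)) * ∑ t, (A ^ (n + i)) s t * w t := by
        simp_rw [Finset.sum_mul, Finset.mul_sum]
        rw [Finset.sum_comm]
        exact Finset.sum_congr rfl fun t _ => Finset.sum_congr rfl fun i _ => by ring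
    _ = ∑ i : Fin d, (-(A.charpoly.coeff (i : ℕ))) * ∑ t, (A ^ (n + (i : ℕ))) s t * w t :=
        (Fin.sum_univ_eq_sum_range _ d).symm


open PowerSeries in
theorem regular_generating_function_rational {S : Type*} [Fintype S]
    (L : Language S) (hL : L.IsRegular)
    (count : ℕ → ℕ)
    (hcount : ∀ n, count n = Nat.card {w : List S // w ∈ L ∧ w.length = n}) :
    (∃ p q : Polynomial ℚ, q.coeff 0 ≠ 0 ∧
        (q : PowerSeries ℚ) * PowerSeries.mk (fun n => (count n : ℚ)) =
          (p : PowerSeries ℚ)) ∧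
      ∃ (d : ℕ), 1 ≤ d ∧ ∃ c : Fin d → ℚ, ∃ N : ℕ,
        ∀ n ≥ N, (count (n + d) : ℚ) = ∑ i : Fin d, c i * count (n + i) := by
  obtain ⟨σ, instσ, M, hM⟩ := hL
  haveI := instσ
  haveI : Nonempty σ := ⟨M.start⟩
  have hcount' : ∀ n, (count n : ℚ)
      = ∑ t, ((RegularGFAux.tmat M) ^ n) M.start t * (if t ∈ M.accept then 1 else 0) := by
    intro n
    rw [hcount n, ← hM]
    exact RegularGFAux.count_eq M n
  set d := Fintype.card σ with hdd
  have hd : 1 ≤ d := Fintype.card_pos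
  obtain ⟨c, hc⟩ := matrix_rec (RegularGFAux.tmat M) M.start
    (fun t => if t ∈ M.accept then 1 else 0)
  have hrec : ∀ n, (count (n + d) : ℚ) = ∑ i : Fin d, c i * count (n + i) := by
    intro n
    rw [hcount', hc n]
    exact Finset.sum_congr rfl fun i _ => by rw [hcount']
  exact ⟨rat_of_rec (fun n => (count n : ℚ)) d hd c hrec, d, hd, c, 0, fun n _ => hrec n⟩
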